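/- Let T be a finite tree with at least one edge, with edge weight function w : E(T) → ℕ and maximum degree Δ. Then there exists a partition of E(T) into matchings M₁, …, M_Δ such that for every i ∈ {1, …, Δ} and every e ∈ M_i there exist at least i − 1 pairwise adjacent edges of T, each of weight at least w(e). -/

import Mathlib

set_option linter.unusedSectionVars false

section TreeEC

open SimpleGraph

variable {α : Type*} [Fintype α] [DecidableEq α] (G : SimpleGraph α) [DecidableRel G.Adj]

namespace TreeEC

variable (r : α)

lemma isPath_concat' {u v x : α} {p : G.Walk u v} (hp : p.IsPath) (hx : x ∉ p.support)
    (h : G.Adj v x) : (p.concat h).IsPath := by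
  apply SimpleGraph.Walk.IsPath.mk'
  rw [SimpleGraph.Walk.support_concat, List.nodup_append]
  refine ⟨hp.support_nodup, List.nodup_singleton x, ?_⟩
  intro y hy z hz hyz
  simp only [List.mem_singleton] at hz
  exact hx (hz ▸ hyz ▸ hy)

lemma path_length_eq (hT : G.IsTree) {v : α} (p : G.Walk r v) (hp : p.IsPath) :
    p.length = G.dist r v := by
  obtain ⟨q, hq, hlen⟩ := hT.isConnected.exists_path_of_dist r v
  rw [ExistsUnique.unique (hT.existsUnique_path r v) hp hq, hlen]

lemma dist_step (hT : G.IsTree) {a b : α} (hab : G.Adj a b)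
    (h : G.dist r a ≤ G.dist r b) : G.dist r b = G.dist r a + 1 := by
  obtain ⟨p, hp, hlen⟩ := hT.isConnected.exists_path_of_dist r a
  by_cases hb : b ∈ p.support
  · exfalso
    have h1 : (p.takeUntil b hb).length = G.dist r b :=
      path_length_eq G r hT _ (hp.takeUntil hb)
    have h2 := congrArg SimpleGraph.Walk.length (p.take_spec hb)
    rw [SimpleGraph.Walk.length_append] at h2
    have h3 : (p.dropUntil b hb).length = 0 := by omega
    exact hab.ne' (SimpleGraph.Walk.eq_of_length_eq_zero h3)
  · have := path_length_eq G r hT (p.concat hab) (isPath_concat' G hp hb hab)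
    rw [SimpleGraph.Walk.length_concat, hlen] at this
    omega

lemma dist_adj_cases (hT : G.IsTree) {a b : α} (hab : G.Adj a b) :
    G.dist r a + 1 = G.dist r b ∨ G.dist r b + 1 = G.dist r a := by
  rcases le_total (G.dist r a) (G.dist r b) with h | h
  · exact Or.inl (dist_step G r hT hab h).symm
  · exact Or.inr (dist_step G r hT hab.symm h).symm

lemma parent_unique (hT : G.IsTree) {a b v : α} (ha : G.Adj a v) (hb : G.Adj b v)
    (hda : G.dist r a + 1 = G.dist r v) (hdb : G.dist r b + 1 = G.dist r v) : a = b := by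
  obtain ⟨p, hp, hlp⟩ := hT.isConnected.exists_path_of_dist r a
  obtain ⟨q, hq, hlq⟩ := hT.isConnected.exists_path_of_dist r b
  have hvp : v ∉ p.support := by
    intro hv
    have := path_length_eq G r hT _ (hp.takeUntil hv)
    have := p.length_takeUntil_le hv
    omega
  have hvq : v ∉ q.support := by
    intro hv
    have := path_length_eq G r hT _ (hq.takeUntil hv)
    have := q.length_takeUntil_le hv
    omega
  have heq : p.concat ha = q.concat hb :=
    ExistsUnique.unique (hT.existsUnique_path r v)
      (isPath_concat' G hp hvp ha) (isPath_concat' G hq hvq hb)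
  obtain ⟨hv, -⟩ := SimpleGraph.Walk.concat_inj heq
  exact hv

lemma exists_parent (hT : G.IsTree) {v : α} (hv : v ≠ r) :
    ∃ u, G.Adj u v ∧ G.dist r u + 1 = G.dist r v := by
  obtain ⟨p, hp, hlen⟩ := hT.isConnected.exists_path_of_dist r v
  obtain ⟨u, huv, q, hq⟩ := SimpleGraph.Walk.exists_eq_cons_of_ne hv p.reverse
  refine ⟨u, huv.symm, ?_⟩
  have hqp : q.reverse.IsPath := by
    have : p.reverse.IsPath := hp.reverse
    rw [hq] at this
    exact this.of_cons.reverse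
  have hlq : q.reverse.length = G.dist r u := path_length_eq G r hT _ hqp
  have : p.reverse.length = q.length + 1 := by rw [hq]; simp
  rw [SimpleGraph.Walk.length_reverse] at this
  rw [SimpleGraph.Walk.length_reverse] at hlq
  have hd0 : G.dist r v ≠ 0 := by
    rw [SimpleGraph.dist_ne_zero_iff_ne_and_reachable]
    exact ⟨Ne.symm hv, hT.isConnected r v⟩
  omega

/-- The parent of `v` w.r.t. root `r`. -/
noncomputable def par (v : α) : α :=
  if h : ∃ u, G.Adj u v ∧ G.dist r u + 1 = G.dist r v then h.choose else v

lemma par_spec (hT : G.IsTree) {v : α} (hv : v ≠ r) :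
    G.Adj (par G r v) v ∧ G.dist r (par G r v) + 1 = G.dist r v := by
  have h := exists_parent G r hT hv
  rw [par, dif_pos h]
  exact h.choose_spec

lemma par_eq (hT : G.IsTree) {u v : α} (huv : G.Adj u v)
    (hd : G.dist r u + 1 = G.dist r v) : par G r v = u := by
  have hv : v ≠ r := by
    intro h; rw [h, SimpleGraph.dist_self] at hd; omega
  have hs := par_spec G r hT hv
  exact parent_unique G r hT hs.1 huv hs.2 hd

variable (w : Sym2 α → ℕ)

/-- Tie-break injection into ℕ. -/
noncomputable def tb : α → ℕ := fun a => (Fintype.equivFin α a : ℕ)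

lemma tb_inj {a b : α} (h : tb a = tb b) : a = b := by
  have := (Fintype.equivFin α).injective (Fin.val_injective h)
  exact this

/-- `a` is strictly bigger than `b` among children of `v` (weight, then tie-break). -/
abbrev big (v a b : α) : Prop :=
  w s(v, b) < w s(v, a) ∨ (w s(v, a) = w s(v, b) ∧ tb b < tb a)

lemma big_irrefl (v a : α) : ¬ big w v a a := by
  simp [big]

lemma big_trans {v a b c : α} (h1 : big w v a b) (h2 : big w v b c) : big w v a c := by
  rcases h1 with h1 | ⟨h1, h1'⟩ <;> rcases h2 with h2 | ⟨h2, h2'⟩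
  · exact Or.inl (h2.trans h1)
  · exact Or.inl (h2 ▸ h1)
  · exact Or.inl (h1 ▸ h2)
  · exact Or.inr ⟨h1.trans h2, h2'.trans h1'⟩

lemma big_total {v a b : α} (hne : a ≠ b) : big w v a b ∨ big w v b a := by
  have htb : tb a ≠ tb b := fun h => hne (tb_inj h)
  rcases lt_trichotomy (w s(v, a)) (w s(v, b)) with h | h | h
  · exact Or.inr (Or.inl h)
  · rcases lt_or_gt_of_ne htb with h' | h'
    · exact Or.inr (Or.inr ⟨h.symm, h'⟩)
    · exact Or.inl (Or.inr ⟨h, h'⟩)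
  · exact Or.inl (Or.inl h)

/-- The children of `v` (neighbors further from the root). -/
noncomputable def sib (v : α) : Finset α :=
  Finset.univ.filter fun u => G.Adj v u ∧ G.dist r v + 1 = G.dist r u

lemma mem_sib {v u : α} : u ∈ sib G r v ↔ G.Adj v u ∧ G.dist r v + 1 = G.dist r u := by
  simp [sib]

/-- The rank of child `b` at `v`: the number of strictly bigger children. -/
noncomputable def rank (v b : α) : ℕ :=
  ((sib G r v).filter fun a => big w v a b).card

lemma rank_lt_of_big {v a b : α} (ha : a ∈ sib G r v) (h : big w v a b) :
    rank G r w v a < rank G r w v b := by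
  apply Finset.card_lt_card
  constructor
  · intro x hx
    rw [Finset.mem_filter] at hx ⊢
    exact ⟨hx.1, big_trans w hx.2 h⟩
  · intro hsub
    have : a ∈ (sib G r v).filter fun x => big w v x b :=
      Finset.mem_filter.2 ⟨ha, h⟩
    have := hsub this
    rw [Finset.mem_filter] at this
    exact big_irrefl w v a this.2

lemma rank_inj {v a b : α} (ha : a ∈ sib G r v) (hb : b ∈ sib G r v) (hne : a ≠ b) :
    rank G r w v a ≠ rank G r w v b := by
  rcases big_total w (v := v) hne with h | h
  · exact Nat.ne_of_lt (rank_lt_of_big G r w ha h)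
  · exact Nat.ne_of_lt' (rank_lt_of_big G r w hb h)

lemma sib_subset_neighbors (v : α) : sib G r v ⊆ G.neighborFinset v := by
  intro x hx
  rw [mem_sib] at hx
  exact (SimpleGraph.mem_neighborFinset G v x).2 hx.1

lemma rank_add_one_le (v : α) {b : α} (hb : b ∈ sib G r v) :
    rank G r w v b + 1 ≤ G.degree v := by
  have hsub : ((sib G r v).filter fun a => big w v a b) ⊆ (G.neighborFinset v).erase b := by
    intro x hx
    rw [Finset.mem_filter] at hx
    refine Finset.mem_erase.2 ⟨?_, sib_subset_neighbors G r v hx.1⟩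
    intro h; exact big_irrefl w v b (h ▸ hx.2)
  have h1 := Finset.card_le_card hsub
  have hbn : b ∈ G.neighborFinset v := sib_subset_neighbors G r v hb
  have h2 := Finset.card_erase_of_mem hbn
  have h3 : 1 ≤ (G.neighborFinset v).card := Finset.card_pos.2 ⟨b, hbn⟩
  rw [SimpleGraph.degree]
  rw [rank]
  omega

lemma rank_add_two_le (hT : G.IsTree) {v : α} (hv : v ≠ r) {b : α} (hb : b ∈ sib G r v) :
    rank G r w v b + 2 ≤ G.degree v := by
  obtain ⟨hadj, hd⟩ := par_spec G r hT hv
  have hpn : par G r v ∈ G.neighborFinset v := (SimpleGraph.mem_neighborFinset G v _).2 hadj.symm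
  have hbn : b ∈ G.neighborFinset v := sib_subset_neighbors G r v hb
  have hpns : par G r v ∉ sib G r v := by
    rw [mem_sib]
    rintro ⟨-, hd'⟩
    omega
  have hpb : par G r v ≠ b := fun h => hpns (h ▸ hb)
  have hsub : ((sib G r v).filter fun a => big w v a b) ⊆
      ((G.neighborFinset v).erase b).erase (par G r v) := by
    intro x hx
    rw [Finset.mem_filter] at hx
    refine Finset.mem_erase.2 ⟨fun h => hpns (h ▸ hx.1), Finset.mem_erase.2
      ⟨fun h => big_irrefl w v b (h ▸ hx.2), sib_subset_neighbors G r v hx.1⟩⟩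
  have h1 := Finset.card_le_card hsub
  have h2 := Finset.card_erase_of_mem hbn
  have h3 := Finset.card_erase_of_mem (Finset.mem_erase.2 ⟨hpb, hpn⟩)
  have h4 : 1 ≤ ((G.neighborFinset v).erase b).card :=
    Finset.card_pos.2 ⟨par G r v, Finset.mem_erase.2 ⟨hpb, hpn⟩⟩
  have h5 : 1 ≤ (G.neighborFinset v).card := Finset.card_pos.2 ⟨b, hbn⟩
  rw [SimpleGraph.degree]
  rw [rank]
  omega

/-- Greedy skip function. -/
def gf (k m : ℕ) : ℕ := if k < m then k else k + 1

lemma gf_le (k m : ℕ) : gf k m ≤ k + 1 := by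
  rw [gf]; split <;> omega

lemma gf_ne (k m : ℕ) : gf k m ≠ m := by
  rw [gf]; split <;> omega

lemma gf_inj {k k' m : ℕ} (h : gf k m = gf k' m) : k = k' := by
  rw [gf, gf] at h
  split at h <;> split at h <;> omega

/-- Color of the edge whose top endpoint is `a` and bottom endpoint is `b`, with fuel `n`. -/
noncomputable def ceAux : ℕ → α → α → ℕ
  | 0, a, b => rank G r w a b
  | n + 1, a, b => if a = r then rank G r w a b
      else gf (rank G r w a b) (ceAux n (par G r a) a)

/-- Color of the edge with top endpoint `a`, bottom endpoint `b`. -/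
noncomputable def ec (a b : α) : ℕ := ceAux G r w (G.dist r a) a b

lemma ec_root (b : α) : ec G r w r b = rank G r w r b := by
  rw [ec, SimpleGraph.dist_self]
  rfl

lemma ec_step (hT : G.IsTree) {a : α} (ha : a ≠ r) (b : α) :
    ec G r w a b = gf (rank G r w a b) (ec G r w (par G r a) a) := by
  have hd := (par_spec G r hT ha).2
  rw [ec, ec, ← hd, ceAux, if_neg ha]

lemma ec_le_rank_add_one (hT : G.IsTree) (a b : α) :
    ec G r w a b ≤ rank G r w a b + 1 := by
  by_cases ha : a = r
  · subst ha; rw [ec_root]; omega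
  · rw [ec_step G r w hT ha]; exact gf_le _ _

lemma ec_lt_maxDegree (hT : G.IsTree) {a b : α} (hadj : G.Adj a b)
    (hd : G.dist r a + 1 = G.dist r b) : ec G r w a b < G.maxDegree := by
  have hb : b ∈ sib G r a := mem_sib G r |>.2 ⟨hadj, hd⟩
  have hdeg := G.degree_le_maxDegree a
  by_cases ha : a = r
  · rw [ha] at hdeg
    rw [ha, ec_root]
    have := rank_add_one_le G r w r (ha ▸ hb)
    omega
  · rw [ec_step G r w hT ha]
    have := rank_add_two_le G r w hT ha hb
    have := gf_le (rank G r w a b) (ec G r w (par G r a) a)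
    omega

lemma ec_ne_parent (hT : G.IsTree) {a : α} (ha : a ≠ r) (b : α) :
    ec G r w a b ≠ ec G r w (par G r a) a := by
  rw [ec_step G r w hT ha]
  exact gf_ne _ _

lemma ec_inj_top (hT : G.IsTree) {a b b' : α} (hb : b ∈ sib G r a) (hb' : b' ∈ sib G r a)
    (hne : b ≠ b') : ec G r w a b ≠ ec G r w a b' := by
  by_cases ha : a = r
  · rw [ha, ec_root, ec_root]
    exact rank_inj G r w (ha ▸ hb) (ha ▸ hb') hne
  · rw [ec_step G r w hT ha, ec_step G r w hT ha]
    intro h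
    exact rank_inj G r w hb hb' hne (gf_inj h)

lemma ec_ne (hT : G.IsTree) {a b a' b' : α} (hab : G.Adj a b) (hd : G.dist r a + 1 = G.dist r b)
    (hab' : G.Adj a' b') (hd' : G.dist r a' + 1 = G.dist r b')
    (hne : s(a, b) ≠ s(a', b')) (x : α) (hx : x ∈ s(a, b)) (hx' : x ∈ s(a', b')) :
    ec G r w a b ≠ ec G r w a' b' := by
  have hb : b ∈ sib G r a := mem_sib G r |>.2 ⟨hab, hd⟩
  have hb' : b' ∈ sib G r a' := mem_sib G r |>.2 ⟨hab', hd'⟩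
  rw [Sym2.mem_iff] at hx hx'
  rcases hx with h1 | h1 <;> rcases hx' with h2 | h2
  · -- a = a'
    obtain rfl : a = a' := h1.symm.trans h2
    refine ec_inj_top G r w hT hb hb' fun h => hne (by rw [h])
  · -- a = b'
    obtain rfl : a = b' := h1.symm.trans h2
    have ha : a ≠ r := by
      intro h; rw [h, SimpleGraph.dist_self] at hd'; omega
    have hpar : par G r a = a' := par_eq G r hT hab' hd'
    rw [← hpar]
    exact ec_ne_parent G r w hT ha b
  · -- b = a'
    obtain rfl : b = a' := h1.symm.trans h2
    have hbr : b ≠ r := by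
      intro h; rw [h, SimpleGraph.dist_self] at hd; omega
    have hpar : par G r b = a := par_eq G r hT hab hd
    intro hcol
    exact ec_ne_parent G r w hT hbr b' (by rw [hpar]; exact hcol.symm)
  · -- b = b'
    obtain rfl : b = b' := h1.symm.trans h2
    have : a = a' := parent_unique G r hT hab hab' hd hd'
    exact absurd (by rw [this]) hne

lemma edge_cases (hT : G.IsTree) {e : Sym2 α} (he : e ∈ G.edgeFinset) :
    ∃ a b, e = s(a, b) ∧ G.Adj a b ∧ G.dist r a + 1 = G.dist r b := by
  revert he
  induction e using Sym2.ind with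
  | _ x y =>
    intro he
    rw [SimpleGraph.mem_edgeFinset, SimpleGraph.mem_edgeSet] at he
    rcases dist_adj_cases G r hT he with h | h
    · exact ⟨x, y, rfl, he, h⟩
    · exact ⟨y, x, Sym2.eq_swap, he.symm, h⟩

end TreeEC

end TreeEC

section Main

open TreeEC

variable {α : Type*} [Fintype α] [DecidableEq α] {G : SimpleGraph α} [DecidableRel G.Adj]

lemma TreeEC.orient_unique (G : SimpleGraph α) (r : α) {a b a' b' : α}
    (h : s(a, b) = s(a', b')) (hd : G.dist r a + 1 = G.dist r b)
    (hd' : G.dist r a' + 1 = G.dist r b') : a = a' ∧ b = b' := by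
  rw [Sym2.eq_iff] at h
  rcases h with ⟨rfl, rfl⟩ | ⟨rfl, rfl⟩
  · exact ⟨rfl, rfl⟩
  · omega


end Main



open Finset

/-- `⌈a / b⌉` for natural numbers. -/
def natCeilDiv (a b : ℕ) : ℕ := (a + b - 1) / b

/-- `P` is the ordered `b`-partition of `S` (w.r.t. weights `w`): the blocks are pairwise
disjoint, cover `S`, each has at most `b` elements, earlier blocks consist of heavier
elements, and all blocks except possibly the last have exactly `b` elements. -/
def IsOrderedBPartition {β : Type*} [DecidableEq β] (w : β → ℕ) (b : ℕ) (S : Finset β)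
    {k : ℕ} (P : Fin k → Finset β) : Prop :=
  (∀ i j : Fin k, i ≠ j → Disjoint (P i) (P j)) ∧
  Finset.univ.biUnion P = S ∧
  (∀ i, (P i).card ≤ b) ∧
  (∀ i j : Fin k, i < j → ∀ x ∈ P i, ∀ y ∈ P j, w y ≤ w x) ∧
  (∀ i j : Fin k, i < j → (P i).card = b)

/-- A `b`-bounded proper vertex coloring of `G` with color classes `C i`:
a partition of the vertex set into independent sets, each of cardinality at most `b`. -/
def IsBddProperVC {α : Type*} (G : SimpleGraph α) (b : ℕ)
    {ι : Type*} (C : ι → Finset α) : Prop :=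
  (∀ v : α, ∃! i, v ∈ C i) ∧
  (∀ i, ∀ u ∈ C i, ∀ v ∈ C i, ¬ G.Adj u v) ∧
  (∀ i, (C i).card ≤ b)

/-- A proper edge coloring of `G` with color classes `C i`: a partition of the edge set
into matchings. -/
def IsProperEC {α : Type*} [Fintype α] [DecidableEq α] (G : SimpleGraph α) [DecidableRel G.Adj]
    {ι : Type*} (C : ι → Finset (Sym2 α)) : Prop :=
  (∀ e ∈ G.edgeFinset, ∃! i, e ∈ C i) ∧
  (∀ i, C i ⊆ G.edgeFinset) ∧
  (∀ i, ∀ e ∈ C i, ∀ f ∈ C i, e ≠ f → ¬ ∃ v, v ∈ e ∧ v ∈ f)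

/-- A `b`-bounded proper edge coloring: a proper edge coloring each of whose classes has
cardinality at most `b`. -/
def IsBddProperEC {α : Type*} [Fintype α] [DecidableEq α] (G : SimpleGraph α) [DecidableRel G.Adj]
    (b : ℕ) {ι : Type*} (C : ι → Finset (Sym2 α)) : Prop :=
  IsProperEC G C ∧ ∀ i, (C i).card ≤ b

/-- A nice `b`-bounded edge coloring: a sequence `C 0, …, C (k-1)` of (nonempty) pairwise
disjoint matchings of `G` covering `E(G)`, each of cardinality at most `b`, such that each
`C i` has cardinality exactly `b` or is a maximal matching of the subgraph of `G` with edge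
set `E(G) \ (C 0 ∪ … ∪ C (i-1))`. -/
def IsNiceBddEC {α : Type*} [Fintype α] [DecidableEq α] (G : SimpleGraph α) [DecidableRel G.Adj]
    (b : ℕ) {k : ℕ} (C : Fin k → Finset (Sym2 α)) : Prop :=
  IsBddProperEC G b C ∧
  (∀ i, (C i).Nonempty) ∧
  (∀ i : Fin k, (C i).card = b ∨
    ∀ e ∈ G.edgeFinset, (∀ j, j ≤ i → e ∉ C j) → ∃ f ∈ C i, ∃ v, v ∈ e ∧ v ∈ f)

/-- A greedy (first-fit) `b`-bounded edge coloring of `G`: a `b`-bounded proper edge coloring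
`C` together with an enumeration `e` of the edges in nonincreasing order of weight and a color
assignment `c` with `e j ∈ C (c j)`, such that each edge is placed in the first color that is
not full and contains no adjacent edge at the moment of placement. -/
def IsGreedyEC {α : Type*} [Fintype α] [DecidableEq α] (G : SimpleGraph α) [DecidableRel G.Adj]
    (w : Sym2 α → ℕ) (b : ℕ) {k m : ℕ} (C : Fin k → Finset (Sym2 α))
    (e : Fin m → Sym2 α) (c : Fin m → Fin k) : Prop :=
  IsBddProperEC G b C ∧
  Function.Injective e ∧
  (∀ f, f ∈ G.edgeFinset ↔ ∃ j, e j = f) ∧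
  (∀ j j' : Fin m, j ≤ j' → w (e j') ≤ w (e j)) ∧
  (∀ j, e j ∈ C (c j)) ∧
  (∀ j : Fin m, ∀ i : Fin k, i < c j →
    ((Finset.univ.filter fun l : Fin m => l < j ∧ c l = i)).card = b ∨
      ∃ l : Fin m, l < j ∧ c l = i ∧ e l ≠ e j ∧ ∃ v, v ∈ e l ∧ v ∈ e j)


/-- Every weighted tree with at least one edge admits a partition of its edge set into `Δ`
matchings `M i` such that every edge `e ∈ M i` admits at least `i − 1` pairwise adjacent
edges of weight at least `w(e)` (here `i : Fin Δ` is `0`-indexed, so "`i − 1`" is `(i : ℕ)`). -/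
theorem stmt_14 {α : Type*} [Fintype α] [DecidableEq α] (G : SimpleGraph α) [DecidableRel G.Adj]
    (hT : G.IsTree) (w : Sym2 α → ℕ) (hE : G.edgeFinset.Nonempty) :
    ∃ M : Fin G.maxDegree → Finset (Sym2 α), IsProperEC G M ∧
      ∀ i : Fin G.maxDegree, ∀ e ∈ M i, ∃ D : Finset (Sym2 α),
        D ⊆ G.edgeFinset ∧ (i : ℕ) ≤ D.card ∧
        (∀ f ∈ D, ∀ g ∈ D, f ≠ g → ∃ v, v ∈ f ∧ v ∈ g) ∧ ∀ f ∈ D, w e ≤ w f := by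
  
  classical
  obtain ⟨r⟩ : Nonempty α := hT.isConnected.nonempty
  set col : Sym2 α → ℕ := fun e =>
    if h : ∃ a b, e = s(a, b) ∧ G.Adj a b ∧ G.dist r a + 1 = G.dist r b
    then TreeEC.ec G r w h.choose h.choose_spec.choose else 0 with hcoldef
  have hcol : ∀ a b : α, G.Adj a b → G.dist r a + 1 = G.dist r b →
      col s(a, b) = TreeEC.ec G r w a b := by
    intro a b hab hd
    have hex : ∃ a' b', s(a, b) = s(a', b') ∧ G.Adj a' b' ∧
        G.dist r a' + 1 = G.dist r b' := ⟨a, b, rfl, hab, hd⟩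
    rw [hcoldef]
    simp only [dif_pos hex]
    obtain ⟨heq, -, hd'⟩ := hex.choose_spec.choose_spec
    obtain ⟨h1, h2⟩ := TreeEC.orient_unique G r heq hd hd'
    exact (congrArg₂ (TreeEC.ec G r w) h1 h2).symm
  set M : Fin G.maxDegree → Finset (Sym2 α) :=
    fun i => G.edgeFinset.filter fun e => col e = (i : ℕ) with hMdef
  have hmemM : ∀ (i : Fin G.maxDegree) (e : Sym2 α),
      e ∈ M i ↔ e ∈ G.edgeFinset ∧ col e = (i : ℕ) := by
    intro i e; rw [hMdef]; simp
  have hbound : ∀ e ∈ G.edgeFinset, col e < G.maxDegree := by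
    intro e he
    obtain ⟨a, b, rfl, hab, hd⟩ := TreeEC.edge_cases G r hT he
    rw [hcol a b hab hd]
    exact TreeEC.ec_lt_maxDegree G r w hT hab hd
  refine ⟨M, ⟨⟨?_, ?_, ?_⟩, ?_⟩⟩
  · -- existence and uniqueness of color
    intro e he
    refine ⟨⟨col e, hbound e he⟩, (hmemM _ e).2 ⟨he, rfl⟩, ?_⟩
    intro j hj
    have := ((hmemM j e).1 hj).2
    exact Fin.ext this.symm
  · intro i
    rw [hMdef]
    exact Finset.filter_subset _ _
  · -- matchings
    intro i e he f hf hne hshare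
    obtain ⟨v, hv, hv'⟩ := hshare
    obtain ⟨hee, hce⟩ := (hmemM i e).1 he
    obtain ⟨hfe, hcf⟩ := (hmemM i f).1 hf
    obtain ⟨a, b, rfl, hab, hd⟩ := TreeEC.edge_cases G r hT hee
    obtain ⟨a', b', rfl, hab', hd'⟩ := TreeEC.edge_cases G r hT hfe
    rw [hcol a b hab hd] at hce
    rw [hcol a' b' hab' hd'] at hcf
    exact TreeEC.ec_ne G r w hT hab hd hab' hd' hne v hv hv' (by rw [hce, hcf])
  · -- the witnessing star
    intro i e he
    obtain ⟨hee, hce⟩ := (hmemM i e).1 he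
    obtain ⟨a, b, rfl, hab, hd⟩ := TreeEC.edge_cases G r hT hee
    rw [hcol a b hab hd] at hce
    have hbsib : b ∈ TreeEC.sib G r a := (TreeEC.mem_sib G r).2 ⟨hab, hd⟩
    set S : Finset α := (TreeEC.sib G r a).filter fun u => TreeEC.big w a u b with hSdef
    refine ⟨insert s(a, b) (S.image fun u => s(a, u)), ?_, ?_, ?_, ?_⟩
    · -- subset of edges
      intro f hf
      rcases Finset.mem_insert.1 hf with rfl | hf
      · exact hee
      · obtain ⟨u, hu, rfl⟩ := Finset.mem_image.1 hf
        rw [hSdef] at hu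
        have := ((TreeEC.mem_sib G r).1 (Finset.mem_filter.1 hu).1).1
        exact SimpleGraph.mem_edgeFinset.2 this
    · -- cardinality
      have hinj : Function.Injective fun u : α => s(a, u) := by
        intro u u' h
        exact Sym2.congr_right.1 h
      have hnm : s(a, b) ∉ S.image fun u => s(a, u) := by
        intro h
        obtain ⟨u, hu, hequ⟩ := Finset.mem_image.1 h
        obtain rfl : u = b := Sym2.congr_right.1 hequ
        exact TreeEC.big_irrefl w a u (Finset.mem_filter.1 hu).2
      rw [Finset.card_insert_of_notMem hnm, Finset.card_image_of_injective _ hinj]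
      have hle : TreeEC.ec G r w a b ≤ TreeEC.rank G r w a b + 1 :=
        TreeEC.ec_le_rank_add_one G r w hT a b
      rw [TreeEC.rank, ← hSdef] at hle
      omega
    · -- pairwise adjacent
      have hmem : ∀ f ∈ insert s(a, b) (S.image fun u => s(a, u)), a ∈ f := by
        intro f hf
        rcases Finset.mem_insert.1 hf with rfl | hf
        · exact Sym2.mem_mk_left a b
        · obtain ⟨u, -, rfl⟩ := Finset.mem_image.1 hf
          exact Sym2.mem_mk_left a u
      exact fun f hf g hg _ => ⟨a, hmem f hf, hmem g hg⟩
    · -- weights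
      intro f hf
      rcases Finset.mem_insert.1 hf with rfl | hf
      · exact le_refl _
      · obtain ⟨u, hu, rfl⟩ := Finset.mem_image.1 hf
        have hbig := (Finset.mem_filter.1 hu).2
        rcases hbig with h | ⟨h, -⟩
        · exact le_of_lt h
        · exact le_of_eq h.symm
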